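/- Let Π_φ and Π_η be rank-one orthogonal projections on ℂ² (2×2 complex matrices with Π² = Π = Π† and trace 1), let p, q ∈ [0,1], let F₁, F₂, F₃ be qubit effects, and let κ₁, κ₂, κ₃ ≥ 0 with κ₁ + κ₂ + κ₃ = 1. If p(1 − Π_η) = κ₁F₁ + κ₃(1 − F₃) and q(1 − Π_φ) = κ₁(1 − F₁) + κ₂F₂ and κ₁ ≠ 0, then Π_η = 1 − Π_φ (equivalently tr(Π_φ Π_η) = 0). -/

import Mathlib

open Matrix
open scoped ComplexOrder

/-- A qubit state: a positive semidefinite 2×2 complex matrix with trace 1. -/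
def QubitState (ρ : Matrix (Fin 2) (Fin 2) ℂ) : Prop :=
  ρ.PosSemidef ∧ ρ.trace = 1

/-- A qubit effect: a 2×2 complex matrix `E` with both `E` and `1 - E` positive semidefinite. -/
def QubitEffect (E : Matrix (Fin 2) (Fin 2) ℂ) : Prop :=
  E.PosSemidef ∧ (1 - E).PosSemidef

/-- A realization of a 3×3 correlation matrix `P` by three qubit states, a three-outcome
qubit POVM `(M11, M21, M31)` and a two-outcome qubit POVM `(M12, M22)`. -/
def IsRealization (P : Matrix (Fin 3) (Fin 3) ℝ)
    (ρ : Fin 3 → Matrix (Fin 2) (Fin 2) ℂ)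
    (M11 M21 M31 M12 M22 : Matrix (Fin 2) (Fin 2) ℂ) : Prop :=
  (∀ x, QubitState (ρ x)) ∧
  QubitEffect M11 ∧ QubitEffect M21 ∧ QubitEffect M31 ∧
  M11 + M21 + M31 = 1 ∧
  QubitEffect M12 ∧ QubitEffect M22 ∧
  M12 + M22 = 1 ∧
  (∀ x, P x 0 = ((ρ x * M11).trace).re ∧
        P x 1 = ((ρ x * M21).trace).re ∧
        P x 2 = ((ρ x * M12).trace).re)

/-- The USD pattern of zeros and ones of the correlation matrix, Eq. (3). -/
def USDpattern (P : Matrix (Fin 3) (Fin 3) ℝ) : Prop :=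
  P 0 2 = 0 ∧ P 1 1 = 0 ∧ P 1 2 = 1 ∧ P 2 0 = 0

/-- The set USD₂ of qubit USD correlations. -/
def USD2 (P : Matrix (Fin 3) (Fin 3) ℝ) : Prop :=
  USDpattern P ∧
  ∃ ρ M11 M21 M31 M12 M22, IsRealization P ρ M11 M21 M31 M12 M22

/-- A three-outcome qubit POVM is simulable by dichotomic measurements, Eq. (1). -/
def Simulable (M11 M21 M31 : Matrix (Fin 2) (Fin 2) ℂ) : Prop :=
  ∃ p1 p2 p3 : ℝ, ∃ N11 N22 N13 : Matrix (Fin 2) (Fin 2) ℂ,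
    0 ≤ p1 ∧ 0 ≤ p2 ∧ 0 ≤ p3 ∧ p1 + p2 + p3 = 1 ∧
    QubitEffect N11 ∧ QubitEffect N22 ∧ QubitEffect N13 ∧
    M11 = p1 • N11 + p3 • N13 ∧
    M21 = p1 • (1 - N11) + p2 • N22 ∧
    M31 = p2 • (1 - N22) + p3 • (1 - N13)

/-- The set SIM₂ of simulable trichotomic qubit correlations in the minimal scenario. -/
def SIM2 (P : Matrix (Fin 3) (Fin 3) ℝ) : Prop :=
  ∃ ρ M11 M21 M31 M12 M22, IsRealization P ρ M11 M21 M31 M12 M22 ∧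
    Simulable M11 M21 M31

/-- The parameterized USD correlation matrix 𝒫(p, q, ξ) of Eq. (4). -/
noncomputable def Pmat (p q ξ : ℝ) : Matrix (Fin 3) (Fin 3) ℝ :=
  !![p * ξ,       q,           0;
     p * (1 - ξ), 0,           1;
     0,           q * (1 - ξ), ξ]


open scoped MatrixOrder in
lemma sandwich_zero {S P : Matrix (Fin 2) (Fin 2) ℂ} (hS : S.PosSemidef)
    (h : Pᴴ * S * P = 0) : S * P = 0 := by
  obtain ⟨B, rfl⟩ : ∃ B, S = Bᴴ * B := CStarAlgebra.nonneg_iff_eq_star_mul_self.mp hS.nonneg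
  have h2 : (B * P)ᴴ * (B * P) = 0 := by
    rw [conjTranspose_mul]
    calc Pᴴ * Bᴴ * (B * P) = Pᴴ * (Bᴴ * B) * P := by noncomm_ring
    _ = 0 := h
  have := conjTranspose_mul_self_eq_zero.mp h2
  rw [mul_assoc, this, mul_zero]

lemma psd_neg_psd_zero {M : Matrix (Fin 2) (Fin 2) ℂ} (h1 : M.PosSemidef)
    (h2 : (-M).PosSemidef) : M = 0 := by
  have hv : ∀ x, M *ᵥ x = 0 := by
    intro x
    rw [← h1.dotProduct_mulVec_zero_iff]
    have a := h1.dotProduct_mulVec_nonneg x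
    have b := h2.dotProduct_mulVec_nonneg x
    rw [neg_mulVec, dotProduct_neg, le_neg, neg_zero] at b
    exact le_antisymm b a
  ext i j
  have := congrFun (hv (Pi.single j 1)) i
  simpa [mulVec_single] using this

open scoped MatrixOrder in
lemma psd_trace_zero {M : Matrix (Fin 2) (Fin 2) ℂ} (h : M.PosSemidef)
    (ht : M.trace = 0) : M = 0 := by
  obtain ⟨B, rfl⟩ : ∃ B, M = Bᴴ * B := CStarAlgebra.nonneg_iff_eq_star_mul_self.mp h.nonneg
  have hB : B = 0 := by
    have hdz : ∀ j, star (fun i => B i j) ⬝ᵥ (fun i => B i j) = 0 := by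
      have hsum : ∑ j, star (fun i => B i j) ⬝ᵥ (fun i => B i j) = 0 := by
        rw [← ht]
        simp [Matrix.trace, Matrix.diag, Matrix.mul_apply, dotProduct, conjTranspose_apply]
      intro j
      have := (Fintype.sum_eq_zero_iff_of_nonneg
        (f := fun j => star (fun i => B i j) ⬝ᵥ (fun i => B i j))
        (fun j => dotProduct_star_self_nonneg _)).mp hsum
      exact congrFun this j
    ext i j
    exact congrFun (dotProduct_star_self_eq_zero.mp (hdz j)) i
  rw [hB]; simp

lemma psd_real_smul {c : ℝ} (hc : 0 ≤ c) {M : Matrix (Fin 2) (Fin 2) ℂ}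
    (h : M.PosSemidef) : (c • M).PosSemidef := by
  have : (c • M) = (c : ℂ) • M := by
    ext i j; simp [Matrix.smul_apply, Complex.real_smul]
  rw [this]
  refine .of_dotProduct_mulVec_nonneg ?_ (fun x => ?_)
  · unfold Matrix.IsHermitian
    rw [conjTranspose_smul, h.1.eq]
    congr 1
    simp
  rw [smul_mulVec, dotProduct_smul]
  exact smul_nonneg (by exact_mod_cast hc) (h.dotProduct_mulVec_nonneg x)

/-- from κ1•F + G = p•(1-P) with G psd, P herm projection, κ1 > 0: F * P = 0 -/
lemma key_step {P F G : Matrix (Fin 2) (Fin 2) ℂ} (hP : P * P = P) (hPH : Pᴴ = P)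
    (hF : F.PosSemidef) (hG : G.PosSemidef) (κ p : ℝ) (hκ : 0 ≤ κ) (hκne : κ ≠ 0)
    (heq : p • ((1 : Matrix (Fin 2) (Fin 2) ℂ) - P) = κ • F + G) :
    F * P = 0 := by
  have hsand : P * (p • ((1 : Matrix (Fin 2) (Fin 2) ℂ) - P)) * P = 0 := by
    rw [Matrix.mul_smul, Matrix.smul_mul, Matrix.mul_sub, Matrix.mul_one, hP,
      Matrix.sub_mul, hP, sub_self, smul_zero]
  rw [heq] at hsand
  have hA : (P * (κ • F) * P).PosSemidef := by
    have := (psd_real_smul hκ hF).mul_mul_conjTranspose_same P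
    rwa [hPH] at this
  have hB : (P * G * P).PosSemidef := by
    have := hG.mul_mul_conjTranspose_same P
    rwa [hPH] at this
  have hsum : P * (κ • F) * P + P * G * P = 0 := by
    rw [← hsand]; noncomm_ring
  have hAz : P * (κ • F) * P = 0 := by
    apply psd_neg_psd_zero hA
    have hBA : P * (κ • F) * P = -(P * G * P) := eq_neg_of_add_eq_zero_left hsum
    rw [neg_eq_iff_eq_neg.mpr hBA]
    exact hB
  have : κ • (P * F * P) = 0 := by
    rw [← hAz, Matrix.mul_smul, Matrix.smul_mul]
  have hPFP : P * F * P = 0 := by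
    rcases smul_eq_zero.mp this with h | h
    · exact absurd h hκne
    · exact h
  apply sandwich_zero hF
  rwa [hPH]

/-- Key step in the proof of Theorem 1: if `κ₁ ≠ 0` in the simulation equations
`p(1 - Π_η) = κ₁ F₁ + κ₃(1 - F₃)` and `q(1 - Π_φ) = κ₁(1 - F₁) + κ₂ F₂`,
then `Π_η = 1 - Π_φ`. -/
theorem kappa1_ne_zero_forces_orthogonal
    (Pphi Peta : Matrix (Fin 2) (Fin 2) ℂ)
    (hPphi : Pphi * Pphi = Pphi) (hPphiH : Pphiᴴ = Pphi) (hPphit : Pphi.trace = 1)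
    (hPeta : Peta * Peta = Peta) (hPetaH : Petaᴴ = Peta) (hPetat : Peta.trace = 1)
    (p q : ℝ) (hp : p ∈ Set.Icc (0 : ℝ) 1) (hq : q ∈ Set.Icc (0 : ℝ) 1)
    (F1 F2 F3 : Matrix (Fin 2) (Fin 2) ℂ)
    (hF1 : QubitEffect F1) (hF2 : QubitEffect F2) (hF3 : QubitEffect F3)
    (κ1 κ2 κ3 : ℝ) (hκ1 : 0 ≤ κ1) (hκ2 : 0 ≤ κ2) (hκ3 : 0 ≤ κ3)
    (hκsum : κ1 + κ2 + κ3 = 1)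
    (heq1 : p • ((1 : Matrix (Fin 2) (Fin 2) ℂ) - Peta) = κ1 • F1 + κ3 • (1 - F3))
    (heq2 : q • ((1 : Matrix (Fin 2) (Fin 2) ℂ) - Pphi) = κ1 • (1 - F1) + κ2 • F2)
    (hκ1ne : κ1 ≠ 0) :
    Peta = 1 - Pphi := by
  have h1 : F1 * Peta = 0 :=
    key_step hPeta hPetaH hF1.1 (psd_real_smul hκ3 hF3.2) κ1 p hκ1 hκ1ne heq1
  have h2 : (1 - F1) * Pphi = 0 :=
    key_step hPphi hPphiH hF1.2 (psd_real_smul hκ2 hF2.1) κ1 q hκ1 hκ1ne heq2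
  have hF1H : F1ᴴ = F1 := hF1.1.1
  have hEtaF1 : Peta * F1 = 0 := by
    have : (F1 * Peta)ᴴ = Peta * F1 := by
      rw [conjTranspose_mul, hF1H, hPetaH]
    rw [← this, h1, conjTranspose_zero]
  have hF1Phi : F1 * Pphi = Pphi := by
    have := h2
    rw [Matrix.sub_mul, Matrix.one_mul, sub_eq_zero] at this
    exact this.symm
  have hEP : Peta * Pphi = 0 := by
    rw [← hF1Phi, ← Matrix.mul_assoc, hEtaF1, Matrix.zero_mul]
  have hPE : Pphi * Peta = 0 := by
    have : (Peta * Pphi)ᴴ = Pphi * Peta := by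
      rw [conjTranspose_mul, hPetaH, hPphiH]
    rw [← this, hEP, conjTranspose_zero]
  set M : Matrix (Fin 2) (Fin 2) ℂ := 1 - (Pphi + Peta) with hM
  have hMH : Mᴴ = M := by
    rw [hM, conjTranspose_sub, conjTranspose_add, hPphiH, hPetaH, conjTranspose_one]
  have hMM : M * M = M := by
    rw [hM]
    rw [Matrix.sub_mul, Matrix.one_mul, Matrix.mul_sub, Matrix.mul_one,
      Matrix.add_mul, Matrix.mul_add, Matrix.mul_add, hPphi, hPeta, hEP, hPE]
    noncomm_ring
  have hMpsd : M.PosSemidef := by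
    have : M = Mᴴ * M := by rw [hMH, hMM]
    rw [this]
    exact posSemidef_conjTranspose_mul_self M
  have hMt : M.trace = 0 := by
    rw [hM, trace_sub, trace_add, hPphit, hPetat, trace_one]
    norm_num
  have hz := psd_trace_zero hMpsd hMt
  rw [hM, sub_eq_zero] at hz
  exact eq_sub_of_add_eq (by rw [add_comm]; exact hz.symm)
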